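/- Let d > 3, q ≥ 2, and l_1 = 0, l_2, …, l_{d−1} ∈ ℤ_q with l_i − l_j a unit whenever i ≠ j, and let 𝒦 = {β = (b_{i,j}) ∈ GL_{d−1}(ℤ) : (l_j − l_i) + ∏_k(t+l_k)^{b_{k,i}} − ∏_k(t+l_k)^{b_{k,j}} = 0 in R_d(ℤ_q) for all i ≠ j, and likewise for the entries of β^{−1}}. If 𝒦 is nontrivial, then q = d−1 and q is prime, every nontrivial element of 𝒦 is a permutation matrix whose permutation is a single cycle of length d−1, and 𝒦 is cyclic of order d−1. Moreover, when q = d−1 is prime and l_i = i−1 for 1 ≤ i ≤ d−1, 𝒦 is the cyclic group of order d−1 generated by the permutation matrix (b_{i,j}) with b_{i+1,i} = 1 for 1 ≤ i ≤ d−2, b_{1,d−1} = 1, and all other entries 0. -/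

import Mathlib

open Polynomial

/-- The multiplicative set of `ℤ_q[t]` generated by the polynomials `t + l i`. -/
noncomputable def dlSub (q d : ℕ) (l : Fin (d-1) → ZMod q) : Submonoid (Polynomial (ZMod q)) :=
  Submonoid.closure {p | ∃ i : Fin (d-1), p = X + C (l i)}

/-- The ring `R_d(ℤ_q) = ℤ_q[t, (t+l_1)⁻¹, …, (t+l_{d-1})⁻¹]`, realized as the localization of
`ℤ_q[t]` at the multiplicative set generated by the `t + l i`. -/
abbrev Rd (q d : ℕ) (l : Fin (d-1) → ZMod q) := Localization (dlSub q d l)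

/-- The image of `t + l i` in `R_d(ℤ_q)`, as a unit. -/
noncomputable def tU (q d : ℕ) (l : Fin (d-1) → ZMod q) (i : Fin (d-1)) : (Rd q d l)ˣ :=
  (IsLocalization.map_units (M := dlSub q d l) (Rd q d l)
    ⟨X + C (l i), Submonoid.subset_closure ⟨i, rfl⟩⟩).unit

/-- The monomial `∏ i (t + l i) ^ (v i)`, as a unit of `R_d(ℤ_q)`. -/
noncomputable def monU (q d : ℕ) (l : Fin (d-1) → ZMod q) (v : Fin (d-1) → ℤ) : (Rd q d l)ˣ :=
  ∏ i, tU q d l i ^ (v i)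

/-- The condition on a `(d-1) × (d-1)` integer matrix `β = (b k i)` that, for all `i ≠ j`,
`(l j - l i) + ∏ k (t + l k)^(b k i) - ∏ k (t + l k)^(b k j) = 0` holds in `R_d(ℤ_q)`. -/
def kCond (q d : ℕ) (l : Fin (d-1) → ZMod q) (β : Matrix (Fin (d-1)) (Fin (d-1)) ℤ) : Prop :=
  ∀ i j : Fin (d-1), i ≠ j →
    algebraMap (Polynomial (ZMod q)) (Rd q d l) (C (l j - l i))
      + (monU q d l (fun k => β k i) : Rd q d l)
      - (monU q d l (fun k => β k j) : Rd q d l) = 0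

/-- The set `𝒦` of invertible integer matrices `β` such that the defining identities hold
both for the entries of `β` and for the entries of `β⁻¹`. -/
def kSet (q d : ℕ) (l : Fin (d-1) → ZMod q) : Set (Matrix.GeneralLinearGroup (Fin (d-1)) ℤ) :=
  {β | kCond q d l ↑β ∧ kCond q d l ↑(β⁻¹)}

open scoped Matrix


section basic
variable (q d : ℕ) (l : Fin (d-1) → ZMod q)

lemma dlSub_monic : ∀ p ∈ dlSub q d l, p.Monic := by
  intro p hp
  induction hp using Submonoid.closure_induction with
  | mem p hp => obtain ⟨i, rfl⟩ := hp; exact monic_X_add_C _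
  | one => exact monic_one
  | mul p r _ _ hp hr => exact hp.mul hr

lemma algMap_inj : Function.Injective (algebraMap (Polynomial (ZMod q)) (Rd q d l)) := by
  apply IsLocalization.injective (Rd q d l) (M := dlSub q d l)
  intro p hp
  rw [mem_nonZeroDivisors_iff_right]
  intro z hz
  rw [mul_comm] at hz
  exact ((dlSub_monic q d l p hp).mul_right_eq_zero_iff).mp hz

lemma tU_val (i : Fin (d-1)) :
    (tU q d l i : Rd q d l) = algebraMap (Polynomial (ZMod q)) (Rd q d l) (X + C (l i)) :=
  IsUnit.unit_spec _

/-- the polynomial `∏ (X + C (l k))^(v k)` -/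
noncomputable def PP (v : Fin (d-1) → ℕ) : Polynomial (ZMod q) := ∏ k, (X + C (l k))^(v k)

lemma PP_monic (v : Fin (d-1) → ℕ) : (PP q d l v).Monic :=
  monic_prod_of_monic _ _ (fun k _ => (monic_X_add_C _).pow _)

lemma monU_nat (v : Fin (d-1) → ℕ) :
    (monU q d l (fun k => (v k : ℤ)) : Rd q d l)
      = algebraMap (Polynomial (ZMod q)) (Rd q d l) (PP q d l v) := by
  rw [monU, PP, map_prod]
  refine Eq.trans (map_prod (Units.coeHom (Rd q d l)) (fun i => tU q d l i ^ ((v i : ℤ))) Finset.univ) ?_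
  refine Finset.prod_congr rfl (fun k _ => ?_)
  show ((tU q d l k ^ ((v k : ℤ)) : (Rd q d l)ˣ) : Rd q d l) = _
  rw [zpow_natCast, Units.val_pow_eq_pow_val, tU_val, map_pow]

lemma monU_add (v w : Fin (d-1) → ℤ) :
    monU q d l (v + w) = monU q d l v * monU q d l w := by
  rw [monU, monU, monU, ← Finset.prod_mul_distrib]
  exact Finset.prod_congr rfl (fun k _ => by rw [Pi.add_apply, zpow_add])


variable (hq : 2 ≤ q) (hl : ∀ i j : Fin (d-1), i ≠ j → IsUnit (l i - l j))

lemma eval_PP (v : Fin (d-1) → ℕ) (k : Fin (d-1)) :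
    eval (-(l k)) (PP q d l v) = ∏ j, (l j - l k)^(v j) := by
  rw [PP, eval_prod]
  exact Finset.prod_congr rfl (fun j _ => by rw [eval_pow, eval_add, eval_X, eval_C]; ring_nf)

include hl in
lemma eval_PP_unit (v : Fin (d-1) → ℕ) (k : Fin (d-1)) (h : v k = 0) :
    IsUnit (eval (-(l k)) (PP q d l v)) := by
  rw [eval_PP]
  refine Finset.prod_induction _ IsUnit (fun a b => IsUnit.mul) isUnit_one (fun j _ => ?_)
  rcases eq_or_ne j k with rfl | hjk
  · rw [h, pow_zero]; exact isUnit_one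
  · exact (hl j k hjk).pow _

lemma eval_PP_zero (v : Fin (d-1) → ℕ) (k : Fin (d-1)) (h : v k ≠ 0) :
    eval (-(l k)) (PP q d l v) = 0 := by
  rw [eval_PP]
  exact Finset.prod_eq_zero (Finset.mem_univ k) (by rw [sub_self, zero_pow h])

include hq in
lemma PP_natDegree (v : Fin (d-1) → ℕ) : (PP q d l v).natDegree = ∑ k, v k := by
  haveI : Nontrivial (ZMod q) := ZMod.nontrivial_iff.mpr (by omega)
  rw [PP, natDegree_prod_of_monic _ _ (fun _ _ => (monic_X_add_C _).pow _)]
  exact Finset.sum_congr rfl (fun k _ => by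
    rw [(monic_X_add_C (l k)).natDegree_pow, natDegree_X_add_C, mul_one])

include hq hl in
lemma poly_core (hd : 3 < d)
    (f : Fin (d-1) → Fin (d-1) → ℕ) (e : Fin (d-1) → ℕ)
    (hmax : ∀ k, e k ≠ 0 → ∃ i, f k i = 0)
    (hF : ∀ i j : Fin (d-1), i ≠ j →
      PP q d l (fun k => f k i) - PP q d l (fun k => f k j)
        = C (l i - l j) * PP q d l e) :
    (∀ k, e k = 0) ∧ ∃ w : Fin (d-1) → Fin (d-1), Function.Bijective w ∧
      ∃ m : ℕ, 1 ≤ m ∧ ∀ k i, f k i = if k = w i then m else 0 := by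
  haveI : Nontrivial (ZMod q) := ZMod.nontrivial_iff.mpr (by omega)
  have hcard : 3 ≤ d - 1 := by omega
  have hF' : ∀ i j : Fin (d-1), i ≠ j →
      (fun i => PP q d l (fun k => f k i)) i - (fun i => PP q d l (fun k => f k i)) j
        = C (l i - l j) * PP q d l e := hF
  generalize hFdef : (fun i => PP q d l (fun k => f k i)) = F at hF'
  set DD : Polynomial (ZMod q) := PP q d l e with hDdef
  have hFPP : ∀ i, F i = PP q d l (fun k => f k i) := fun i => by rw [← hFdef]
  have hFe : ∀ (i j k : Fin (d-1)), i ≠ j →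
      eval (-(l k)) (F i) - eval (-(l k)) (F j) = (l i - l j) * eval (-(l k)) DD := by
    intro i j k hij
    have := congrArg (eval (-(l k))) (hF' i j hij)
    simpa [eval_sub, eval_mul, eval_C] using this
  have P1' : ∀ k, e k ≠ 0 → ∀ i, f k i = 0 := by
    intro k hk i
    obtain ⟨i₀, hi₀⟩ := hmax k hk
    rcases eq_or_ne i i₀ with rfl | hne
    · exact hi₀
    · have h1 := hFe i i₀ k hne
      rw [hDdef, eval_PP_zero q d l e k hk, mul_zero, sub_eq_zero] at h1
      by_contra hfk
      rw [hFPP i, hFPP i₀, eval_PP_zero q d l _ k hfk] at h1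
      exact (eval_PP_unit q d l hl _ k hi₀).ne_zero h1.symm
  have P1 : ∀ (k : Fin (d-1)) (i j : Fin (d-1)), i ≠ j → f k i = 0 ∨ f k j = 0 := by
    intro k i j hij
    rcases eq_or_ne (e k) 0 with hek | hek
    · by_contra hcon
      push_neg at hcon
      have h1 := hFe i j k hij
      rw [hFPP i, hFPP j, eval_PP_zero q d l _ k hcon.1, eval_PP_zero q d l _ k hcon.2,
        sub_self] at h1
      have hu : IsUnit ((l i - l j) * eval (-(l k)) DD) :=
        (hl i j hij).mul (eval_PP_unit q d l hl e k hek)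
      exact hu.ne_zero h1.symm
    · exact Or.inl (P1' k hek i)
  set mdeg : Fin (d-1) → ℕ := fun i => ∑ k, f k i with hmdeg
  have hFdeg : ∀ i, (F i).natDegree = mdeg i := fun i => by
    rw [hFPP i]; exact PP_natDegree q d l hq _
  have hFmon : ∀ i, (F i).Monic := fun i => by rw [hFPP i]; exact PP_monic q d l _
  have hDmon : DD.Monic := PP_monic q d l e
  set ED : ℕ := ∑ k, e k with hED
  have hDdeg : DD.natDegree = ED := PP_natDegree q d l hq e
  have hRHSne : ∀ i j : Fin (d-1), i ≠ j → C (l i - l j) * DD ≠ 0 := by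
    intro i j hij h0
    have hlc : (C (l i - l j) * DD).leadingCoeff = l i - l j := by
      rw [leadingCoeff_mul' (by
        rw [leadingCoeff_C, hDmon.leadingCoeff, mul_one]; exact (hl i j hij).ne_zero),
        leadingCoeff_C, hDmon.leadingCoeff, mul_one]
    rw [h0, leadingCoeff_zero] at hlc
    exact (hl i j hij).ne_zero hlc.symm
  have hRHSdeg : ∀ i j : Fin (d-1), i ≠ j → (C (l i - l j) * DD).natDegree = ED := by
    intro i j hij
    rw [natDegree_mul' (by
      rw [leadingCoeff_C, hDmon.leadingCoeff, mul_one]; exact (hl i j hij).ne_zero),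
      natDegree_C, hDdeg, zero_add]
  have hsubdeg : ∀ i j : Fin (d-1), i ≠ j → (F i - F j).natDegree = ED := by
    intro i j hij; rw [hF' i j hij]; exact hRHSdeg i j hij
  have hsubne : ∀ i j : Fin (d-1), i ≠ j → F i - F j ≠ 0 := by
    intro i j hij; rw [hF' i j hij]; exact hRHSne i j hij
  have hdeq : ∀ i j : Fin (d-1), mdeg i = mdeg j := by
    by_contra hcon
    push_neg at hcon
    obtain ⟨i1, j1, hij1⟩ := hcon
    obtain ⟨istar, -, hstar⟩ := Finset.exists_max_image Finset.univ mdeg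
      ⟨i1, Finset.mem_univ i1⟩
    have hstar' : ∀ i, mdeg i ≤ mdeg istar := fun i => hstar i (Finset.mem_univ i)
    obtain ⟨j', hj'⟩ : ∃ j', mdeg j' < mdeg istar := by
      rcases lt_or_eq_of_le (hstar' i1) with h | h
      · exact ⟨i1, h⟩
      · refine ⟨j1, lt_of_le_of_ne (hstar' j1) ?_⟩
        rw [← h]
        exact fun hh => hij1 hh.symm
    have hne1 : istar ≠ j' := fun h => by rw [h] at hj'; exact lt_irrefl _ hj'
    have hEDeq : ED = mdeg istar := by
      have h2 := hsubdeg istar j' hne1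
      rw [natDegree_sub_eq_left_of_natDegree_lt (by rw [hFdeg, hFdeg]; exact hj'),
        hFdeg] at h2
      exact h2.symm
    obtain ⟨r, hr1, hr2⟩ : ∃ r : Fin (d-1), r ≠ istar ∧ r ≠ j' := by
      have h1 : ({istar, j'} : Finset (Fin (d-1))).card ≤ 2 :=
        (Finset.card_insert_le _ _).trans (by simp)
      have h2 : (({istar, j'} : Finset (Fin (d-1)))ᶜ).Nonempty := by
        rw [← Finset.card_pos, Finset.card_compl]
        have h3 : Fintype.card (Fin (d-1)) = d - 1 := Fintype.card_fin _
        omega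
      obtain ⟨r, hr⟩ := h2
      simp only [Finset.mem_compl, Finset.mem_insert, Finset.mem_singleton, not_or] at hr
      exact ⟨r, hr.1, hr.2⟩
    rcases eq_or_ne (mdeg r) (mdeg istar) with hreq | hrne
    · have hdlt : (F r - F istar).degree < (F r).degree := by
        refine degree_sub_lt ?_ ((hFmon r).ne_zero) ?_
        · rw [degree_eq_natDegree (hFmon r).ne_zero, degree_eq_natDegree (hFmon istar).ne_zero,
            hFdeg, hFdeg, hreq]
        · rw [(hFmon r).leadingCoeff, (hFmon istar).leadingCoeff]
      have hdeg1 : (F r - F istar).degree = (ED : WithBot ℕ) := by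
        rw [degree_eq_natDegree (hsubne r istar hr1), hsubdeg r istar hr1]
      rw [hdeg1, degree_eq_natDegree (hFmon r).ne_zero, hFdeg, hreq, ← hEDeq] at hdlt
      exact lt_irrefl _ hdlt
    · have hrlt : mdeg r < mdeg istar := lt_of_le_of_ne (hstar' r) hrne
      have h1 : (F r - F j').natDegree ≤ max (mdeg r) (mdeg j') := by
        have h2 := natDegree_sub_le (F r) (F j')
        rwa [hFdeg, hFdeg] at h2
      rw [hsubdeg r j' hr2, hEDeq] at h1
      have h3 : max (mdeg r) (mdeg j') < mdeg istar := max_lt hrlt hj'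
      omega
  have hne01 : (⟨0, by omega⟩ : Fin (d-1)) ≠ ⟨1, by omega⟩ := by
    intro h; rw [Fin.ext_iff] at h; simp at h
  set m : ℕ := mdeg ⟨0, by omega⟩ with hm
  have hdeqm : ∀ i, mdeg i = m := fun i => hdeq i _
  have hm1 : 1 ≤ m := by
    by_contra hm0
    push_neg at hm0
    have hmz : m = 0 := by omega
    have hz : ∀ i k, f k i = 0 := by
      intro i k
      have h4 : mdeg i = 0 := by rw [hdeqm i, hmz]
      rw [hmdeg] at h4
      exact (Finset.sum_eq_zero_iff.mp h4) k (Finset.mem_univ k)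
    have hFeq : ∀ i : Fin (d-1), F i = 1 := by
      intro i
      rw [hFPP i, PP]
      apply Finset.prod_eq_one
      intro k _
      rw [hz i k, pow_zero]
    exact hsubne _ _ hne01 (by rw [hFeq, hFeq, sub_self])
  have hwit : ∀ i, ∃ k, f k i ≠ 0 := by
    intro i
    by_contra hcon
    push_neg at hcon
    have h4 : mdeg i = 0 := Finset.sum_eq_zero (fun k _ => hcon k)
    rw [hdeqm i] at h4
    omega
  choose w hw using hwit
  have hwinj : Function.Injective w := by
    intro i j hij
    by_contra hne
    rcases P1 (w i) i j hne with h | h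
    · exact hw i h
    · rw [hij] at h
      exact hw j h
  have hwbij : Function.Bijective w := (Finite.injective_iff_bijective).mp hwinj
  have he0 : ∀ k, e k = 0 := by
    intro k
    by_contra hek
    obtain ⟨i, rfl⟩ := hwbij.surjective k
    exact hw i (P1' (w i) hek i)
  have hsingle : ∀ k i, f k i ≠ 0 → k = w i := by
    intro k i hki
    obtain ⟨i', rfl⟩ := hwbij.surjective k
    rcases eq_or_ne i i' with rfl | hne
    · rfl
    · rcases P1 (w i') i i' hne with h | h
      · exact absurd h hki
      · exact absurd h (hw i')
  have hval : ∀ i, f (w i) i = m := by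
    intro i
    have h4 := hdeqm i
    rw [hmdeg] at h4
    rw [← h4]
    symm
    apply Finset.sum_eq_single
    · intro k _ hk
      by_contra h
      exact hk (hsingle k i h)
    · intro h
      exact absurd (Finset.mem_univ _) h
  refine ⟨he0, w, hwbij, m, hm1, fun k i => ?_⟩
  rcases eq_or_ne k (w i) with rfl | hne
  · simp [hval i]
  · simp only [hne, if_false]
    by_contra h
    exact hne (hsingle k i h)


include hq hl in
lemma kCond_to_perm (hd : 3 < d) (β : Matrix (Fin (d-1)) (Fin (d-1)) ℤ)
    (hdet : IsUnit β.det)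
    (hk : ∀ i j : Fin (d-1), i ≠ j →
      algebraMap (Polynomial (ZMod q)) (Rd q d l) (C (l j - l i))
        + (monU q d l (fun k => β k i) : Rd q d l)
        - (monU q d l (fun k => β k j) : Rd q d l) = 0) :
    ∃ σ : Equiv.Perm (Fin (d-1)), (∀ k i, β k i = if k = σ i then 1 else 0) ∧
      ∀ i j : Fin (d-1), l (σ i) - l (σ j) = l i - l j := by
  classical
  set e : Fin (d-1) → ℕ := fun k => Finset.univ.sup (fun i => (-β k i).toNat) with he
  set f : Fin (d-1) → Fin (d-1) → ℕ := fun k i => (β k i + e k).toNat with hf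
  have hnonneg : ∀ k i, (0:ℤ) ≤ β k i + e k := by
    intro k i
    have h1 : ((- β k i).toNat : ℤ) ≤ (e k : ℤ) := by
      exact_mod_cast Nat.cast_le.mpr (Finset.le_sup (f := fun i => (-β k i).toNat)
        (Finset.mem_univ i))
    have h2 : -β k i ≤ ((-β k i).toNat : ℤ) := Int.self_le_toNat _
    omega
  have hfe : ∀ k i, (f k i : ℤ) = β k i + e k := by
    intro k i
    rw [hf]
    exact Int.toNat_of_nonneg (hnonneg k i)
  have hmax : ∀ k, e k ≠ 0 → ∃ i, f k i = 0 := by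
    intro k hk0
    obtain ⟨i, -, hi⟩ := Finset.exists_mem_eq_sup Finset.univ
      ⟨⟨0, by omega⟩, Finset.mem_univ _⟩ (fun i => (-β k i).toNat)
    refine ⟨i, ?_⟩
    have h1 : e k = (-β k i).toNat := hi
    have h2 : 0 < (-β k i).toNat := by omega
    have h3 : ((-β k i).toNat : ℤ) = -β k i := Int.toNat_of_nonneg (by omega)
    have h4 : β k i + (e k : ℤ) = 0 := by rw [h1, h3]; ring
    have h5 : f k i = (β k i + (e k:ℤ)).toNat := rfl
    omega
  -- the polynomial identity
  have hF : ∀ i j : Fin (d-1), i ≠ j →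
      PP q d l (fun k => f k i) - PP q d l (fun k => f k j)
        = C (l i - l j) * PP q d l e := by
    intro i j hij
    have hcol : ∀ i₂ : Fin (d-1),
        monU q d l (fun k => β k i₂) * monU q d l (fun k => (e k : ℤ))
          = monU q d l (fun k => (f k i₂ : ℤ)) := by
      intro i₂
      rw [← monU_add]
      congr 1
      funext k
      rw [Pi.add_apply, hfe]
    have h0 := hk i j hij
    have h1 := congrArg (· * ((monU q d l (fun k => (e k : ℤ)) : (Rd q d l)ˣ) : Rd q d l)) h0
    simp only [sub_mul, add_mul, zero_mul] at h1
    rw [← Units.val_mul, ← Units.val_mul, hcol i, hcol j, monU_nat, monU_nat, monU_nat,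
      ← map_mul] at h1
    have h2 : algebraMap (Polynomial (ZMod q)) (Rd q d l)
        (C (l j - l i) * PP q d l e + PP q d l (fun k => f k i)
          - PP q d l (fun k => f k j)) = algebraMap (Polynomial (ZMod q)) (Rd q d l) 0 := by
      rw [map_sub, map_add, map_zero]
      exact h1
    have h3 := algMap_inj q d l h2
    have h4 : C (l i - l j) = - C (l j - l i) := by rw [← C_neg]; ring_nf
    rw [h4]
    linear_combination h3
  obtain ⟨he0, w, hwbij, m, hm1, hshape⟩ := poly_core q d l hq hl hd f e hmax hF
  set σ : Equiv.Perm (Fin (d-1)) := Equiv.ofBijective w hwbij with hσ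
  have hσw : ∀ i, σ i = w i := fun i => rfl
  have hβ : ∀ k i, β k i = if k = σ i then (m:ℤ) else 0 := by
    intro k i
    have h1 : β k i = (f k i : ℤ) - e k := by rw [hfe]; ring
    rw [h1, he0 k, hshape k i, hσw]
    push_cast
    split <;> simp
  -- determinant forces m = 1
  have hm : m = 1 := by
    have hmat : β = (m : ℤ) • (Equiv.Perm.permMatrix ℤ σ)ᵀ := by
      funext k i
      rw [hβ k i]
      rcases eq_or_ne k (σ i) with h | h
      · simp [h, Equiv.Perm.permMatrix, PEquiv.toMatrix_apply, Equiv.toPEquiv_apply]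
      · simp [h, h.symm, Ne.symm h, Equiv.Perm.permMatrix, PEquiv.toMatrix_apply,
          Equiv.toPEquiv_apply, Equiv.symm_apply_eq]
    rw [hmat, Matrix.det_smul, Matrix.det_transpose, Matrix.det_permutation] at hdet
    have h5 : IsUnit ((m:ℤ) ^ Fintype.card (Fin (d-1))) := by
      rcases Int.units_eq_one_or (Equiv.Perm.sign σ) with h | h <;>
        rw [h] at hdet <;> simpa using hdet
    have h6 : IsUnit (m : ℤ) := by
      rw [isUnit_pow_iff (by simp [Fintype.card_fin]; omega)] at h5
      exact h5
    rcases Int.isUnit_iff.mp h6 with h | h <;> omega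
  -- translation relation
  refine ⟨σ, fun k i => by rw [hβ k i, hm]; norm_num, fun i j => ?_⟩
  rcases eq_or_ne i j with rfl | hij
  · simp
  have h1 := hF i j hij
  have hPPf : ∀ i₂ : Fin (d-1), PP q d l (fun k => f k i₂) = X + C (l (σ i₂)) := by
    intro i₂
    rw [PP]
    have : ∀ k, (X + C (l k))^(f k i₂) = if k = σ i₂ then X + C (l k) else 1 := by
      intro k
      rw [hshape k i₂, hσw, hm]
      split <;> simp
    rw [Finset.prod_congr rfl (fun k _ => this k), Finset.prod_ite_eq' Finset.univ (σ i₂)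
      (fun k => X + C (l k)), if_pos (Finset.mem_univ _)]
  have hPPe : PP q d l e = 1 := by
    rw [PP]
    apply Finset.prod_eq_one
    intro k _
    rw [he0 k, pow_zero]
  rw [hPPf i, hPPf j, hPPe, mul_one] at h1
  have h2 : C (l (σ i)) - C (l (σ j)) = C (l i - l j) := by linear_combination h1
  rw [← C_sub] at h2
  exact C_injective h2

include hq hl in
lemma l_injective : Function.Injective l := by
  haveI : Nontrivial (ZMod q) := ZMod.nontrivial_iff.mpr (by omega)
  intro i j h
  by_contra hne
  have h2 := hl i j hne
  rw [h, sub_self] at h2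
  exact not_isUnit_zero h2

end basic

/-- the permutation matrix (columns indexed by `i`, with the `1` in row `σ i`) -/
def Pmat (d : ℕ) (σ : Equiv.Perm (Fin (d-1))) : Matrix (Fin (d-1)) (Fin (d-1)) ℤ :=
  Matrix.of fun k i => if k = σ i then 1 else 0

lemma Pmat_apply (d : ℕ) (σ : Equiv.Perm (Fin (d-1))) (k i : Fin (d-1)) :
    Pmat d σ k i = if k = σ i then 1 else 0 := rfl

lemma Pmat_mul (d : ℕ) (σ τ : Equiv.Perm (Fin (d-1))) :
    Pmat d σ * Pmat d τ = Pmat d (σ * τ) := by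
  funext k i
  rw [Matrix.mul_apply, Pmat_apply]
  rw [Finset.sum_eq_single (τ i)]
  · rw [Pmat_apply, Pmat_apply, if_pos rfl, mul_one, Equiv.Perm.mul_apply]
  · intro j _ hj
    rw [Pmat_apply (d := d) σ, Pmat_apply, if_neg hj, mul_zero]
  · intro h
    exact absurd (Finset.mem_univ _) h

lemma Pmat_one (d : ℕ) : Pmat d 1 = 1 := by
  funext k i
  rw [Pmat_apply, Matrix.one_apply, Equiv.Perm.one_apply]

lemma Pmat_inj (d : ℕ) : Function.Injective (Pmat d) := by
  intro σ τ h
  ext i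
  have h2 := congrFun (congrFun h (σ i)) i
  rw [Pmat_apply, Pmat_apply, if_pos rfl] at h2
  by_contra hne
  rw [if_neg (show σ i ≠ τ i from fun hh => hne (by rw [hh]))] at h2
  exact one_ne_zero h2

/-- the permutation matrix as an element of `GL_{d-1}(ℤ)` -/
def PGL (d : ℕ) (σ : Equiv.Perm (Fin (d-1))) : Matrix.GeneralLinearGroup (Fin (d-1)) ℤ :=
  ⟨Pmat d σ, Pmat d σ⁻¹,
    by rw [Pmat_mul, mul_inv_cancel, Pmat_one],
    by rw [Pmat_mul, inv_mul_cancel, Pmat_one]⟩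

lemma PGL_coe (d : ℕ) (σ : Equiv.Perm (Fin (d-1))) :
    (PGL d σ : Matrix (Fin (d-1)) (Fin (d-1)) ℤ) = Pmat d σ := rfl

lemma PGL_mul (d : ℕ) (σ τ : Equiv.Perm (Fin (d-1))) :
    PGL d σ * PGL d τ = PGL d (σ * τ) := by
  apply Units.ext
  rw [Units.val_mul, PGL_coe, PGL_coe, PGL_coe, Pmat_mul]

lemma PGL_one (d : ℕ) : PGL d 1 = 1 := by
  apply Units.ext
  rw [PGL_coe, Pmat_one, Units.val_one]

lemma PGL_inv (d : ℕ) (σ : Equiv.Perm (Fin (d-1))) : (PGL d σ)⁻¹ = PGL d σ⁻¹ := by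
  apply Units.ext
  rfl

lemma PGL_inj (d : ℕ) : Function.Injective (PGL d) := by
  intro σ τ h
  exact Pmat_inj d (congrArg Units.val h)

lemma PGL_pow (d : ℕ) (σ : Equiv.Perm (Fin (d-1))) (m : ℕ) :
    PGL d σ ^ m = PGL d (σ ^ m) := by
  induction m with
  | zero => rw [pow_zero, pow_zero, PGL_one]
  | succ m ih => rw [pow_succ, pow_succ, ih, PGL_mul]

section basic2
variable (q d : ℕ) (l : Fin (d-1) → ZMod q)
variable (hq : 2 ≤ q) (hl : ∀ i j : Fin (d-1), i ≠ j → IsUnit (l i - l j))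

lemma monU_single (j : Fin (d-1)) :
    monU q d l (fun k => if k = j then 1 else 0) = tU q d l j := by
  rw [monU]
  have h1 : ∀ k : Fin (d-1), tU q d l k ^ (if k = j then (1:ℤ) else 0)
      = if k = j then tU q d l k else 1 := by
    intro k
    split <;> simp
  rw [Finset.prod_congr rfl (fun k _ => h1 k),
    Finset.prod_ite_eq' Finset.univ j (fun k => tU q d l k), if_pos (Finset.mem_univ _)]

lemma kCond_of_trans (σ : Equiv.Perm (Fin (d-1))) (c : ZMod q)
    (hc : ∀ i, l (σ i) = l i + c) :
    ∀ i j : Fin (d-1), i ≠ j →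
      algebraMap (Polynomial (ZMod q)) (Rd q d l) (C (l j - l i))
        + (monU q d l (fun k => Pmat d σ k i) : Rd q d l)
        - (monU q d l (fun k => Pmat d σ k j) : Rd q d l) = 0 := by
  intro i j hij
  have hcol : ∀ i₂ : Fin (d-1),
      (monU q d l (fun k => Pmat d σ k i₂) : Rd q d l)
        = algebraMap (Polynomial (ZMod q)) (Rd q d l) (X + C (l (σ i₂))) := by
    intro i₂
    rw [show (fun k => Pmat d σ k i₂) = (fun k => if k = σ i₂ then (1:ℤ) else 0) from rfl,
      monU_single, tU_val]
  rw [hcol i, hcol j, ← map_add, ← map_sub, show C (l j - l i) + (X + C (l (σ i)))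
    - (X + C (l (σ j))) = 0 from by rw [hc i, hc j]; simp only [map_sub, map_add]; ring,
    map_zero]

include hq in
lemma trans_inv (σ : Equiv.Perm (Fin (d-1))) (c : ZMod q)
    (hc : ∀ i, l (σ i) = l i + c) : ∀ i, l (σ⁻¹ i) = l i + (-c) := by
  intro i
  have h1 := hc (σ⁻¹ i)
  rw [← Equiv.Perm.mul_apply, mul_inv_cancel, Equiv.Perm.one_apply] at h1
  rw [h1]
  ring

end basic2

section final
variable (q d : ℕ) (l : Fin (d-1) → ZMod q)
variable (hq : 2 ≤ q) (hl : ∀ i j : Fin (d-1), i ≠ j → IsUnit (l i - l j))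

include hq hl in
lemma trans_props (hd : 3 < d) (hl0 : l ⟨0, Nat.sub_pos_of_lt (by omega)⟩ = 0)
    (σ : Equiv.Perm (Fin (d-1))) (c : ZMod q)
    (hc : ∀ i, l (σ i) = l i + c) (hc0 : c ≠ 0) :
    q = d - 1 ∧ q.Prime ∧ σ.IsCycle ∧ σ.support.card = d - 1 := by
  haveI : NeZero q := ⟨by omega⟩
  haveI : Nontrivial (ZMod q) := ZMod.nontrivial_iff.mpr (by omega)
  set i₀ : Fin (d-1) := ⟨0, by omega⟩ with hi₀
  have hfix : ∀ i, σ i ≠ i := by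
    intro i h
    apply hc0
    have h1 := hc i
    rw [h] at h1
    exact (left_eq_add.mp h1)
  have hcu : IsUnit c := by
    have h1 := hl (σ i₀) i₀ (hfix i₀)
    rw [hc i₀] at h1
    simpa using h1
  have hiter : ∀ (t : ℕ) (i : Fin (d-1)), l ((σ ^ t) i) = l i + (t : ZMod q) * c := by
    intro t
    induction t with
    | zero => intro i; simp
    | succ t ih =>
      intro i
      rw [pow_succ', Equiv.Perm.mul_apply, hc ((σ ^ t) i), ih i]
      push_cast
      ring
  have hgi : ∀ s t : ℕ, s < q → t < q → (σ ^ s) i₀ = (σ ^ t) i₀ → s = t := by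
    intro s t hs ht h
    have h1 : l i₀ + (s:ZMod q) * c = l i₀ + (t:ZMod q)*c := by
      rw [← hiter, ← hiter, h]
    have h2 : (s:ZMod q) * c = (t:ZMod q) * c := by
      exact add_left_cancel h1
    have h3 : (s : ZMod q) = t := IsUnit.mul_right_cancel hcu h2
    have h4 := ZMod.val_cast_of_lt hs
    have h5 := ZMod.val_cast_of_lt ht
    rw [← h4, ← h5, h3]
  have hginj : Function.Injective (fun t : Fin q => (σ ^ (t:ℕ)) i₀) := by
    intro s t h
    exact Fin.ext (hgi s t s.isLt t.isLt h)
  have hqle : q ≤ d - 1 := by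
    have h6 := Fintype.card_le_of_injective _ hginj
    simpa using h6
  have hdle : d - 1 ≤ q := by
    have h6 := Fintype.card_le_of_injective l (l_injective q d l hq hl)
    simpa [ZMod.card] using h6
  have hqd : q = d - 1 := le_antisymm hqle hdle
  have hlsurj : Function.Surjective l := by
    have h6 : Function.Bijective l := (Fintype.bijective_iff_injective_and_card l).mpr
      ⟨l_injective q d l hq hl, by simp [ZMod.card, hqd]⟩
    exact h6.surjective
  have hprime : q.Prime := by
    rw [Nat.prime_def_lt]
    refine ⟨hq, fun m hm hmd => ?_⟩
    have hm0 : m ≠ 0 := by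
      rintro rfl
      rw [zero_dvd_iff] at hmd
      omega
    have hmne : (m : ZMod q) ≠ 0 := by
      rw [Ne, ZMod.natCast_eq_zero_iff]
      intro hdvd
      have := Nat.le_of_dvd (by omega) hdvd
      omega
    have hmu : IsUnit (m : ZMod q) := by
      obtain ⟨i, hi⟩ := hlsurj (m : ZMod q)
      have hne : i ≠ i₀ := by
        intro h
        rw [h, hi₀, hl0] at hi
        exact hmne hi.symm
      have h7 := hl i i₀ hne
      rwa [hi₀, hl0, sub_zero, hi] at h7
    have hcop := (ZMod.isUnit_iff_coprime m q).mp hmu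
    exact Nat.dvd_one.mp (hcop ▸ Nat.dvd_gcd dvd_rfl hmd)
  have hsupp : σ.support = Finset.univ :=
    Finset.eq_univ_iff_forall.mpr (fun i => Equiv.Perm.mem_support.mpr (hfix i))
  refine ⟨hqd, hprime, ?_, by rw [hsupp, Finset.card_univ, Fintype.card_fin]⟩
  refine ⟨i₀, hfix i₀, fun y _ => ?_⟩
  have hbij : Function.Bijective (fun t : Fin q => (σ ^ (t:ℕ)) i₀) :=
    (Fintype.bijective_iff_injective_and_card _).mpr ⟨hginj, by simp [hqd]⟩
  obtain ⟨t, ht⟩ := hbij.surjective y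
  exact ⟨(t : ℕ), by rw [zpow_natCast]; exact ht⟩

include hq hl in
lemma kSet_elem (hd : 3 < d) (β : Matrix.GeneralLinearGroup (Fin (d-1)) ℤ)
    (hβ : β ∈ kSet q d l) :
    ∃ (σ : Equiv.Perm (Fin (d-1))) (c : ZMod q),
      (∀ i, l (σ i) = l i + c) ∧ β = PGL d σ ∧ (c = 0 ↔ β = 1) := by
  have hdet : IsUnit ((β : Matrix (Fin (d-1)) (Fin (d-1)) ℤ)).det := by
    rw [← Matrix.isUnit_iff_isUnit_det]
    exact ⟨β, rfl⟩
  obtain ⟨σ, hmat, hrel⟩ := kCond_to_perm q d l hq hl hd (↑β) hdet hβ.1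
  set i₀ : Fin (d-1) := ⟨0, by omega⟩ with hi₀
  have hβP : β = PGL d σ := by
    apply Units.ext
    rw [PGL_coe]
    funext k i
    rw [hmat k i, Pmat_apply]
  have hc : ∀ i, l (σ i) = l i + (l (σ i₀) - l i₀) := by
    intro i
    have h1 := hrel i i₀
    linear_combination h1
  refine ⟨σ, l (σ i₀) - l i₀, hc, hβP, ?_, ?_⟩
  · intro h0
    have hσ1 : σ = 1 := by
      apply Equiv.ext
      intro i
      apply l_injective q d l hq hl
      rw [hc i, h0, add_zero, Equiv.Perm.one_apply]
    rw [hβP, hσ1, PGL_one]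
  · intro h1
    rw [h1] at hβP
    have hσ1 : σ = 1 := Pmat_inj d (by rw [← PGL_coe, ← hβP, Units.val_one, Pmat_one])
    rw [hσ1, Equiv.Perm.one_apply, sub_self]

include hq hl in
lemma kSet_structure (hd : 3 < d) (hlsurj : Function.Surjective l) :
    ∃ Pf : ZMod q → Matrix.GeneralLinearGroup (Fin (d-1)) ℤ,
      Function.Injective Pf ∧
      (∀ c, Pf c ∈ kSet q d l) ∧
      (∀ c k i, (Pf c : Matrix (Fin (d-1)) (Fin (d-1)) ℤ) k i
        = if l k = l i + c then 1 else 0) ∧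
      Pf 0 = 1 ∧
      (∀ m : ℕ, Pf 1 ^ m = Pf (m : ZMod q)) ∧
      kSet q d l = {β | ∃ m : ℕ, β = Pf 1 ^ m} ∧
      (kSet q d l).ncard = q := by
  haveI : NeZero q := ⟨by omega⟩
  have hlinj := l_injective q d l hq hl
  have hlbij : Function.Bijective l := ⟨hlinj, hlsurj⟩
  set lE : Fin (d-1) ≃ ZMod q := Equiv.ofBijective l hlbij with hlE
  have hlEa : ∀ i, lE i = l i := fun i => rfl
  set σc : ZMod q → Equiv.Perm (Fin (d-1)) :=
    fun c => (lE.trans (Equiv.addRight c)).trans lE.symm with hσc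
  have hc : ∀ c (i : Fin (d-1)), l (σc c i) = l i + c := by
    intro c i
    show l (lE.symm (Equiv.addRight c (lE i))) = l i + c
    rw [← hlEa (lE.symm _), Equiv.apply_symm_apply, Equiv.coe_addRight, hlEa]
  have hmul : ∀ c c', σc c * σc c' = σc (c' + c) := by
    intro c c'
    apply Equiv.ext
    intro i
    apply hlinj
    rw [Equiv.Perm.mul_apply, hc, hc, hc]
    ring
  have h0 : σc 0 = 1 := by
    apply Equiv.ext
    intro i
    apply hlinj
    rw [hc, Equiv.Perm.one_apply, add_zero]
  set Pf : ZMod q → Matrix.GeneralLinearGroup (Fin (d-1)) ℤ := fun c => PGL d (σc c)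
    with hPf
  have hσcinj : Function.Injective σc := by
    intro c c' h
    have h1 := congrArg l (congrFun (congrArg (fun (e : Equiv.Perm (Fin (d-1))) => (e : Fin (d-1) → Fin (d-1))) h) ⟨0, by omega⟩)
    rw [hc, hc] at h1
    exact add_left_cancel h1
  have hPfinj : Function.Injective Pf := fun c c' h => hσcinj (PGL_inj d h)
  have hPfmem : ∀ c, Pf c ∈ kSet q d l := by
    intro c
    constructor
    · exact kCond_of_trans q d l (σc c) c (hc c)
    · show kCond q d l ↑((PGL d (σc c))⁻¹)
      rw [PGL_inv]
      exact kCond_of_trans q d l (σc c)⁻¹ (-c) (trans_inv q d l hq (σc c) c (hc c))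
  have hPfent : ∀ c k i, (Pf c : Matrix (Fin (d-1)) (Fin (d-1)) ℤ) k i
      = if l k = l i + c then 1 else 0 := by
    intro c k i
    rw [hPf]
    show (if k = σc c i then (1:ℤ) else 0) = if l k = l i + c then 1 else 0
    congr 1
    apply propext
    constructor
    · intro h
      rw [h, hc]
    · intro h
      apply hlinj
      rw [h, hc]
  have hPf0 : Pf 0 = 1 := by rw [hPf]; show PGL d (σc 0) = 1; rw [h0, PGL_one]
  have hPfpow : ∀ m : ℕ, Pf 1 ^ m = Pf (m : ZMod q) := by
    intro m
    induction m with
    | zero => rw [pow_zero, Nat.cast_zero, hPf0]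
    | succ m ih =>
      rw [pow_succ, ih]
      show PGL d (σc (m : ZMod q)) * PGL d (σc 1) = PGL d (σc ((m+1 : ℕ) : ZMod q))
      rw [PGL_mul, hmul]
      push_cast
      rw [add_comm]
  have hset : kSet q d l = {β | ∃ m : ℕ, β = Pf 1 ^ m} := by
    ext β
    constructor
    · intro hβ
      obtain ⟨σ, c, hcσ, rfl, -⟩ := kSet_elem q d l hq hl hd β hβ
      have hσeq : σ = σc c := by
        apply Equiv.ext
        intro i
        apply hlinj
        rw [hcσ i, hc]
      refine ⟨c.val, ?_⟩
      rw [hPfpow, ZMod.natCast_rightInverse c]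
      show PGL d σ = PGL d (σc c)
      rw [hσeq]
    · rintro ⟨m, rfl⟩
      rw [hPfpow]
      exact hPfmem _
  have hncard : (kSet q d l).ncard = q := by
    have hset2 : kSet q d l = ↑(Finset.univ.image Pf) := by
      rw [hset]
      ext β
      simp only [Set.mem_setOf_eq, Finset.coe_image, Set.mem_image, Finset.mem_coe,
        Finset.mem_univ, Finset.coe_univ, Set.image_univ, Set.mem_range]
      constructor
      · rintro ⟨m, rfl⟩
        exact ⟨(m : ZMod q), (hPfpow m).symm⟩
      · rintro ⟨c, rfl⟩
        exact ⟨c.val, by rw [hPfpow, ZMod.natCast_rightInverse c]⟩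
    rw [hset2, Set.ncard_coe_finset, Finset.card_image_of_injective _ hPfinj,
      Finset.card_univ, ZMod.card]
  exact ⟨Pf, hPfinj, hPfmem, hPfent, hPf0, hPfpow, hset, hncard⟩

end final


/-- Theorem 3.3 (case `d > 3`).  If the group `𝒦` of matrices `β ∈ GL_{d-1}(ℤ)`
satisfying the defining identities (for `β` and `β⁻¹`) is nontrivial, then `q = d-1` is
prime, every nontrivial element of `𝒦` is a permutation matrix whose permutation is a
single cycle of length `d-1`, and `𝒦` is cyclic of order `d-1`.  Moreover, when
`q = d-1` is prime and `l_i = i-1` (i.e. `l i = i` in our `0`-indexed notation), `𝒦` is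
the cyclic group of order `d-1` generated by the permutation matrix `(b_{i,j})` with
`b_{i+1,i} = 1` (indices mod `d-1`) and all other entries `0`. -/
theorem statement6 (q d : ℕ) (hq : 2 ≤ q) (hd : 3 < d) (l : Fin (d-1) → ZMod q)
    (hl0 : l ⟨0, by omega⟩ = 0)
    (hl : ∀ i j : Fin (d-1), i ≠ j → IsUnit (l i - l j)) :
    ((∃ β ∈ kSet q d l, β ≠ 1) →
      q = d - 1 ∧ q.Prime ∧
      (∀ β ∈ kSet q d l, β ≠ 1 →
        ∃ σ : Equiv.Perm (Fin (d-1)), σ.IsCycle ∧ σ.support.card = d - 1 ∧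
          ∀ k i : Fin (d-1),
            (β : Matrix (Fin (d-1)) (Fin (d-1)) ℤ) k i = if k = σ i then 1 else 0) ∧
      (∃ β₀ ∈ kSet q d l,
        kSet q d l = {β | ∃ m : ℕ, β = β₀ ^ m} ∧ (kSet q d l).ncard = d - 1)) ∧
    (q = d - 1 → q.Prime → (∀ i : Fin (d-1), l i = (i : ZMod q)) →
      ∃ P : Matrix.GeneralLinearGroup (Fin (d-1)) ℤ,
        (∀ k i : Fin (d-1),
          (P : Matrix (Fin (d-1)) (Fin (d-1)) ℤ) k i
            = if (k : ℕ) = ((i : ℕ) + 1) % (d-1) then 1 else 0) ∧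
        orderOf P = d - 1 ∧
        kSet q d l = {β | ∃ m : ℕ, β = P ^ m}) := by
  haveI : NeZero q := ⟨by omega⟩
  constructor
  · rintro ⟨β, hβm, hβne⟩
    obtain ⟨σ, c, hc, hβP, hc0iff⟩ := kSet_elem q d l hq hl hd β hβm
    have hc0 : c ≠ 0 := fun h => hβne (hc0iff.mp h)
    obtain ⟨hqd, hprime, -, -⟩ := trans_props q d l hq hl hd hl0 σ c hc hc0
    have hlsurj : Function.Surjective l :=
      ((Fintype.bijective_iff_injective_and_card l).mpr
        ⟨l_injective q d l hq hl, by simp [ZMod.card, hqd]⟩).surjective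
    obtain ⟨Pf, hPfinj, hPfmem, hPfent, hPf0, hPfpow, hkset, hncard⟩ :=
      kSet_structure q d l hq hl hd hlsurj
    refine ⟨hqd, hprime, ?_, Pf 1, hPfmem 1, hkset, by rw [hncard, hqd]⟩
    intro β' hβ' hβ'ne
    obtain ⟨σ', c', hc', hβP', hc0iff'⟩ := kSet_elem q d l hq hl hd β' hβ'
    have hc'0 : c' ≠ 0 := fun h => hβ'ne (hc0iff'.mp h)
    obtain ⟨-, -, hcyc, hsupp⟩ := trans_props q d l hq hl hd hl0 σ' c' hc' hc'0
    exact ⟨σ', hcyc, hsupp, fun k i => by rw [hβP']; rfl⟩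
  · intro hqd hprime hli
    have hlsurj : Function.Surjective l :=
      ((Fintype.bijective_iff_injective_and_card l).mpr
        ⟨l_injective q d l hq hl, by simp [ZMod.card, hqd]⟩).surjective
    obtain ⟨Pf, hPfinj, hPfmem, hPfent, hPf0, hPfpow, hkset, hncard⟩ :=
      kSet_structure q d l hq hl hd hlsurj
    refine ⟨Pf 1, ?_, ?_, hkset⟩
    · intro k i
      rw [hPfent 1 k i]
      congr 1
      apply propext
      rw [hli k, hli i]
      have hkq : (k : ℕ) < q := by rw [hqd]; exact k.isLt
      have hcast : ((d - 1 : ℕ) : ZMod q) = 0 := by rw [← hqd]; exact ZMod.natCast_self q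
      have key : ∀ x : ℕ, ((x % (d-1) : ℕ) : ZMod q) = (x : ZMod q) := by
        intro x
        conv_rhs => rw [← Nat.div_add_mod x (d-1)]
        push_cast
        rw [hcast]
        ring
      constructor
      · intro h
        have h2 : ((k : ℕ) : ZMod q) = ((((i:ℕ)+1) % (d-1) : ℕ) : ZMod q) := by
          rw [key]
          push_cast
          rw [h]
        have h3 := congrArg ZMod.val h2
        rwa [ZMod.val_cast_of_lt hkq,
          ZMod.val_cast_of_lt (by
            have h4 := Nat.mod_lt ((i:ℕ)+1) (show 0 < d - 1 by omega)
            omega)] at h3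
      · intro h
        have h2 : ((k:ℕ) : ZMod q) = ((((i:ℕ)+1) % (d-1) : ℕ) : ZMod q) := by rw [h]
        rw [key] at h2
        push_cast at h2
        exact h2
    · haveI : Fact q.Prime := ⟨hprime⟩
      have hq1 : Pf 1 ^ q = 1 := by rw [hPfpow, ZMod.natCast_self, hPf0]
      have hne1 : Pf 1 ≠ 1 := by
        intro h
        rw [← hPf0] at h
        exact one_ne_zero (hPfinj h)
      have h5 := orderOf_eq_prime hq1 hne1
      omega
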